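/- Let W_af = W ⋉ Q∨ be an affine Weyl group, ρ∨ the half-sum of positive coroots, and let (y_k)_{k≥0} be a sequence in W_af with y_{k+1} = y_k ∗ t_{−2ρ∨} for all k, where ∗ denotes the Demazure product computed along a fixed reduced expression of t_{−2ρ∨}. Then there exists m₁ ≥ 0 such that for all k ≥ m₁, y_{k+1} = y_k · t_{−2ρ∨} (ordinary product) and ℓ(y_k t_{−2nρ∨}) = ℓ(y_k) + ℓ(t_{−2nρ∨}) for all n > 0. -/

import Mathlib

open scoped Classical

/-- Compatibility: the multiplicative group structure on `AddAut A` that the older Mathlib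
provided (`g * h = h.trans g`, `1 = refl`, `g⁻¹ = g.symm`); current Mathlib makes
`AddAut A` an additive group instead. -/
instance AddAut.groupCompat (A : Type*) [Add A] : Group (AddAut A) where
  mul g h := AddEquiv.trans h g
  one := AddEquiv.refl _
  inv := AddEquiv.symm
  mul_assoc _ _ _ := rfl
  one_mul _ := rfl
  mul_one _ := rfl
  inv_mul_cancel := AddEquiv.self_trans_symm

@[simp]
theorem AddAut.groupCompat_one_apply {A : Type*} [Add A] (a : A) : (1 : AddAut A) a = a :=
  rfl

@[simp]
theorem AddAut.groupCompat_mul_apply {A : Type*} [Add A] (e₁ e₂ : AddAut A) (a : A) :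
    (e₁ * e₂) a = e₁ (e₂ a) :=
  rfl

/-- The data of a finite crystallographic root system (simple roots `α`, simple coroots `αv`,
positive roots `Δpos`, Weyl group `W` acting on the root/weight lattice `P` and on the
coroot lattice `Qv`, highest root `θ`), from which the affine Weyl group
`W_af = W ⋉ Q∨` and its Iwahori–Matsumoto length function are constructed below. -/
structure AffineRootSetup where
  /-- index set of the simple roots -/
  I : Type
  [fintypeI : Fintype I]
  /-- the lattice containing the roots (root/weight lattice) -/
  P : Type
  [acgP : AddCommGroup P]
  /-- the coroot lattice `Q∨` -/
  Qv : Type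
  [acgQv : AddCommGroup Qv]
  /-- the pairing `⟨·,·⟩ : P × Q∨ → ℤ` -/
  pair : P →+ Qv →+ ℤ
  /-- simple roots -/
  α : I → P
  /-- simple coroots -/
  αv : I → Qv
  pair_simple : ∀ i, pair (α i) (αv i) = 2
  /-- the finite Weyl group -/
  W : Type
  [groupW : Group W]
  [fintypeW : Fintype W]
  /-- action of `W` on the root lattice -/
  σP : W →* AddAut P
  /-- action of `W` on the coroot lattice -/
  σQv : W →* AddAut Qv
  pair_invariant : ∀ (w : W) (β : P) (ξ : Qv), pair (σP w β) (σQv w ξ) = pair β ξ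
  /-- simple reflections -/
  s : I → W
  s_act : ∀ (i : I) (β : P), σP (s i) β = β - pair β (αv i) • α i
  s_act_v : ∀ (i : I) (ξ : Qv), σQv (s i) ξ = ξ - pair (α i) ξ • αv i
  sgen : Subgroup.closure (Set.range s) = ⊤
  /-- the set of positive roots -/
  Δpos : Finset P
  simple_mem : ∀ i, α i ∈ Δpos
  pos_decomp : ∀ β ∈ Δpos, β ∈ AddSubmonoid.closure (Set.range α)
  neg_not_pos : ∀ β ∈ Δpos, -β ∉ Δpos
  root_stable : ∀ (w : W), ∀ β ∈ Δpos, σP w β ∈ Δpos ∨ -(σP w β) ∈ Δpos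
  /-- the coroot `β∨` of a root `β` -/
  coroot : P → Qv
  coroot_simple : ∀ i, coroot (α i) = αv i
  coroot_equivariant : ∀ (w : W) (β : P), coroot (σP w β) = σQv w (coroot β)
  coroot_neg : ∀ β : P, coroot (-β) = -coroot β
  /-- the highest root -/
  θ : P
  θ_mem : θ ∈ Δpos
  /-- the reflection in the highest root -/
  sθ : W
  sθ_act : ∀ β : P, σP sθ β = β - pair β (coroot θ) • θ

namespace AffineRootSetup

attribute [instance] fintypeI acgP acgQv groupW fintypeW

variable (R : AffineRootSetup)

/-- `W` acting on `Multiplicative Q∨`. -/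
def phi : R.W →* MulAut (Multiplicative R.Qv) where
  toFun w := AddEquiv.toMultiplicative (R.σQv w)
  map_one' := by ext x; simp
  map_mul' w v := by ext x; simp

/-- The affine Weyl group `W_af = W ⋉ Q∨`, realized as a semidirect product. -/
abbrev Waf := Multiplicative R.Qv ⋊[R.phi] R.W

/-- the translation `t_ξ ∈ W_af` for `ξ ∈ Q∨` -/
def t (ξ : R.Qv) : R.Waf := SemidirectProduct.inl (Multiplicative.ofAdd ξ)

/-- the inclusion `W ⊆ W_af` -/
def j (w : R.W) : R.Waf := SemidirectProduct.inr w

/-- the `W`-component `w` in the normal form `x = w t_ξ` -/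
def wpart (x : R.Waf) : R.W := x.right

/-- the translation component `ξ` in the normal form `x = w t_ξ` -/
def ξpart (x : R.Waf) : R.Qv := R.σQv x.right⁻¹ (Multiplicative.toAdd x.left)

/-- The Iwahori–Matsumoto length function on the affine Weyl group:
`ℓ(w t_ξ) = ∑_{β ∈ Δ⁺} |⟨β, ξ⟩ + χ(w β ∈ Δ⁻)|`; it coincides with the Coxeter length of
`W_af` as a Coxeter group with simple reflections `s_0, s_1, …, s_n`, and restricts on `W`
to the length function of the finite Weyl group. -/
noncomputable def len (x : R.Waf) : ℕ :=
  ∑ β ∈ R.Δpos,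
    (R.pair β (R.ξpart x) + (if R.σP (R.wpart x) β ∈ R.Δpos then 0 else 1)).natAbs

/-- The semi-infinite length `ℓ∞(w t_ξ) = ℓ(w) + 2⟨ρ, ξ⟩`,
where `2⟨ρ, ξ⟩ = ∑_{β ∈ Δ⁺} ⟨β, ξ⟩`. -/
noncomputable def slen (x : R.Waf) : ℤ :=
  (R.len (R.j (R.wpart x)) : ℤ) + ∑ β ∈ R.Δpos, R.pair β (R.ξpart x)

/-- `2ρ∨`, the sum of the positive coroots. -/
def tworhov : R.Qv := ∑ β ∈ R.Δpos, R.coroot β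

/-- The set of affine simple reflections `{s_i : i ∈ I} ∪ {s_0}`,
where `s_0 = s_θ t_{−θ∨}`. -/
def Saf : Set R.Waf :=
  Set.range (fun i => R.j (R.s i)) ∪ {R.j R.sθ * R.t (-(R.coroot R.θ))}

end AffineRootSetup

namespace AffineRootSetup

variable (R : AffineRootSetup)

/-! ### Basic component lemmas -/

@[simp] lemma wpart_mul (x y : R.Waf) : R.wpart (x * y) = R.wpart x * R.wpart y := rfl

@[simp] lemma wpart_one : R.wpart (1 : R.Waf) = 1 := rfl

@[simp] lemma wpart_t (η : R.Qv) : R.wpart (R.t η) = 1 := rfl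

@[simp] lemma wpart_j (v : R.W) : R.wpart (R.j v) = v := rfl

lemma σQv_apply_inv_apply (w : R.W) (ξ : R.Qv) : R.σQv w (R.σQv w⁻¹ ξ) = ξ := by
  have : R.σQv w * R.σQv w⁻¹ = 1 := by rw [← map_mul, mul_inv_cancel, map_one]
  calc R.σQv w (R.σQv w⁻¹ ξ) = (R.σQv w * R.σQv w⁻¹) ξ := rfl
    _ = ξ := by rw [this]; rfl

lemma σQv_inv_apply_apply (w : R.W) (ξ : R.Qv) : R.σQv w⁻¹ (R.σQv w ξ) = ξ := by
  simpa using R.σQv_apply_inv_apply w⁻¹ ξ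

lemma pair_σP (w : R.W) (β : R.P) (ξ : R.Qv) :
    R.pair (R.σP w β) ξ = R.pair β (R.σQv w⁻¹ ξ) := by
  conv_lhs => rw [← R.σQv_apply_inv_apply w ξ]
  exact R.pair_invariant w β (R.σQv w⁻¹ ξ)

@[simp] lemma ξpart_one : R.ξpart (1 : R.Waf) = 0 := by
  simp [ξpart]

lemma ξpart_mul (x y : R.Waf) :
    R.ξpart (x * y) = R.σQv (R.wpart y)⁻¹ (R.ξpart x) + R.ξpart y := by
  show R.σQv (x.right * y.right)⁻¹ (Multiplicative.toAdd ((x*y).left)) = _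
  have hl : (x*y).left = x.left * R.phi x.right y.left := rfl
  rw [hl]
  have : Multiplicative.toAdd (x.left * R.phi x.right y.left)
      = Multiplicative.toAdd x.left + R.σQv x.right (Multiplicative.toAdd y.left) := rfl
  rw [this, map_add, mul_inv_rev, map_mul]
  show R.σQv y.right⁻¹ (R.σQv x.right⁻¹ _) + R.σQv y.right⁻¹ (R.σQv x.right⁻¹ (R.σQv x.right _)) = _
  rw [R.σQv_inv_apply_apply]
  rfl

@[simp] lemma ξpart_t (η : R.Qv) : R.ξpart (R.t η) = η := by
  simp [ξpart, t]

@[simp] lemma ξpart_j (v : R.W) : R.ξpart (R.j v) = 0 := by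
  simp [ξpart, j]

lemma ξpart_mul_t (x : R.Waf) (η : R.Qv) : R.ξpart (x * R.t η) = R.ξpart x + η := by
  rw [ξpart_mul]; simp

lemma ξpart_mul_j (x : R.Waf) (v : R.W) : R.ξpart (x * R.j v) = R.σQv v⁻¹ (R.ξpart x) := by
  rw [ξpart_mul]; simp

lemma t_mul (ξ η : R.Qv) : R.t ξ * R.t η = R.t (ξ + η) := by
  unfold t
  rw [← map_mul]
  rfl


/-! ### The coefficient function -/

/-- `cf x γ = ⟨γ, ξ(x)⟩ + χ(w(x)·γ ∉ Δ⁺)`; for `γ ∈ Δ⁺`, `len x = ∑ |cf x γ|`. -/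
noncomputable def cf (x : R.Waf) (γ : R.P) : ℤ :=
  R.pair γ (R.ξpart x) + (if R.σP (R.wpart x) γ ∈ R.Δpos then 0 else 1)

lemma len_eq (x : R.Waf) : R.len x = ∑ β ∈ R.Δpos, (R.cf x β).natAbs := rfl

lemma zero_notin_pos : (0 : R.P) ∉ R.Δpos := by
  intro h
  have := R.neg_not_pos 0 h
  rw [neg_zero] at this
  exact this h

lemma mem_pos_ne_zero {β : R.P} (h : β ∈ R.Δpos) : β ≠ 0 := by
  rintro rfl; exact R.zero_notin_pos h

/-- exactly-one-of dichotomy for images of positive roots -/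
lemma dichot (w : R.W) {β : R.P} (hβ : β ∈ R.Δpos) :
    (R.σP w β ∈ R.Δpos ∧ -(R.σP w β) ∉ R.Δpos) ∨
    (R.σP w β ∉ R.Δpos ∧ -(R.σP w β) ∈ R.Δpos) := by
  rcases R.root_stable w β hβ with h | h
  · exact Or.inl ⟨h, R.neg_not_pos _ h⟩
  · refine Or.inr ⟨fun hc => R.neg_not_pos _ hc h, h⟩

lemma cf_neg (x : R.Waf) {β : R.P} (hβ : β ∈ R.Δpos) :
    R.cf x (-β) = 1 - R.cf x β := by
  unfold cf
  rw [map_neg, map_neg]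
  simp only [AddMonoidHom.neg_apply]
  rcases R.dichot (R.wpart x) hβ with ⟨h1, h2⟩ | ⟨h1, h2⟩
  · rw [if_pos h1, if_neg h2]; ring
  · rw [if_neg h1, if_pos h2]; ring

@[simp] lemma len_one : R.len (1 : R.Waf) = 0 := by
  rw [len_eq]
  refine Finset.sum_eq_zero fun β hβ => ?_
  have : R.cf 1 β = 0 := by
    unfold cf
    simp only [ξpart_one, wpart_one, map_zero, map_one]
    rw [if_pos]
    · simp
    · simpa using hβ
  rw [this]; rfl

lemma cf_mul_t (x : R.Waf) (η : R.Qv) (β : R.P) :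
    R.cf (x * R.t η) β = R.cf x β + R.pair β η := by
  unfold cf
  rw [ξpart_mul_t, wpart_mul, wpart_t, mul_one, map_add]
  ring

lemma cf_mul_j (x : R.Waf) (v : R.W) (β : R.P) :
    R.cf (x * R.j v) β = R.cf x (R.σP v β) := by
  unfold cf
  rw [ξpart_mul_j, wpart_mul, wpart_j, ← R.pair_σP, map_mul]
  rfl


/-! ### The affine root space and the action of `Waf` on it -/

/-- affine roots live in `P × ℤ` -/
abbrev V := R.P × ℤ

/-- action of `Waf` on affine roots -/
def actW (x : R.Waf) (v : R.V) : R.V :=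
  (R.σP (R.wpart x) v.1, v.2 - R.pair v.1 (R.ξpart x))

lemma actW_mul (x y : R.Waf) (v : R.V) :
    R.actW (x * y) v = R.actW x (R.actW y v) := by
  unfold actW
  rw [ξpart_mul, wpart_mul, map_mul]
  refine Prod.ext rfl ?_
  show v.2 - R.pair v.1 _ = v.2 - R.pair v.1 (R.ξpart y) - R.pair (R.σP (R.wpart y) v.1) (R.ξpart x)
  rw [map_add, R.pair_σP]
  ring

@[simp] lemma actW_one (v : R.V) : R.actW 1 v = v := by
  unfold actW
  simp

lemma actW_add (x : R.Waf) (u v : R.V) :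
    R.actW x (u + v) = R.actW x u + R.actW x v := by
  unfold actW
  simp only [Prod.fst_add, Prod.snd_add, map_add]
  refine Prod.ext (by simp) ?_
  show u.2 + v.2 - (R.pair u.1 (R.ξpart x) + R.pair v.1 (R.ξpart x)) = _
  show _ = (u.2 - R.pair u.1 (R.ξpart x)) + (v.2 - R.pair v.1 (R.ξpart x))
  ring

lemma actW_neg (x : R.Waf) (v : R.V) : R.actW x (-v) = - R.actW x v := by
  unfold actW
  simp only [Prod.fst_neg, Prod.snd_neg, map_neg, AddMonoidHom.neg_apply]
  refine Prod.ext rfl ?_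
  show -v.2 - -(R.pair v.1 (R.ξpart x)) = -(v.2 - R.pair v.1 (R.ξpart x))
  ring

lemma pair_zsmul_left (k : ℤ) (β : R.P) (ξ : R.Qv) :
    R.pair (k • β) ξ = k * R.pair β ξ := by
  have : R.pair (k • β) ξ = (R.pair.flip ξ) (k • β) := rfl
  rw [this, map_zsmul]
  simp

lemma pair_neg_left (β : R.P) (ξ : R.Qv) : R.pair (-β) ξ = -R.pair β ξ := by
  rw [map_neg]; rfl

lemma actW_zsmul (x : R.Waf) (k : ℤ) (v : R.V) :
    R.actW x (k • v) = k • R.actW x v := by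
  unfold actW
  refine Prod.ext ?_ ?_
  · show R.σP (R.wpart x) (k • v.1) = k • (R.σP (R.wpart x) v.1)
    exact map_zsmul _ k _
  · show k * v.2 - R.pair (k • v.1) (R.ξpart x) = k * (v.2 - R.pair v.1 (R.ξpart x))
    rw [R.pair_zsmul_left]
    ring

/-- positivity of an affine pair -/
def PosA (v : R.V) : Prop := 0 < v.2 ∨ (v.2 = 0 ∧ v.1 ∈ R.Δpos)

/-- negativity -/
def NegA (v : R.V) : Prop := R.PosA (-v)

/-- the finite part is a (plus or minus) root -/
def IsRt (v : R.V) : Prop := v.1 ∈ R.Δpos ∨ -v.1 ∈ R.Δpos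

/-- positive affine roots -/
def PosPair (v : R.V) : Prop := R.IsRt v ∧ R.PosA v

lemma negA_iff (v : R.V) : R.NegA v ↔ (v.2 < 0 ∨ (v.2 = 0 ∧ -v.1 ∈ R.Δpos)) := by
  unfold NegA PosA
  constructor
  · rintro (h | ⟨h1, h2⟩)
    · left; simpa using h
    · right; exact ⟨by simpa using h1, h2⟩
  · rintro (h | ⟨h1, h2⟩)
    · left; simpa using h
    · right; exact ⟨by simpa using h1, h2⟩

lemma not_posA_and_negA {v : R.V} (hp : R.PosA v) (hn : R.NegA v) : False := by
  rw [negA_iff] at hn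
  rcases hp with h | ⟨h1, h2⟩ <;> rcases hn with h' | ⟨h1', h2'⟩ <;> try omega
  · exact R.neg_not_pos _ h2 h2'

lemma posA_or_negA {v : R.V} (hrt : R.IsRt v) : R.PosA v ∨ R.NegA v := by
  rw [negA_iff]
  unfold PosA
  rcases lt_trichotomy v.2 0 with h | h | h
  · right; left; exact h
  · rcases hrt with h' | h'
    · left; right; exact ⟨h, h'⟩
    · right; right; exact ⟨h, h'⟩
  · left; left; exact h

lemma isRt_actW (x : R.Waf) {v : R.V} (hrt : R.IsRt v) : R.IsRt (R.actW x v) := by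
  unfold IsRt at *
  rcases hrt with h | h
  · rcases R.root_stable (R.wpart x) _ h with h' | h'
    · exact Or.inl h'
    · exact Or.inr h'
  · rcases R.root_stable (R.wpart x) _ h with h' | h'
    · refine Or.inr ?_
      show -(R.σP (R.wpart x) v.1) ∈ R.Δpos
      rw [← map_neg]; exact h'
    · refine Or.inl ?_
      show (R.σP (R.wpart x) v.1) ∈ R.Δpos
      have : R.σP (R.wpart x) v.1 = -(R.σP (R.wpart x) (-v.1)) := by rw [map_neg, neg_neg]
      rw [this]; exact h'


/-! ### Simple reflections: basic facts -/

lemma si_alpha (i : R.I) : R.σP (R.s i) (R.α i) = -(R.α i) := by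
  rw [R.s_act, R.pair_simple]
  show R.α i - (2:ℤ) • R.α i = -(R.α i)
  rw [two_zsmul]
  abel

lemma js_ne_one (i : R.I) : R.j (R.s i) ≠ 1 := by
  intro h
  have hw : R.s i = 1 := by
    have := congrArg R.wpart h
    simpa using this
  have h2 : R.σP (R.s i) (R.α i) = R.α i := by rw [hw, map_one]; rfl
  rw [R.si_alpha] at h2
  have h3 : (2:ℤ) • R.α i = 0 := by
    have : R.α i + R.α i = 0 := by
      nth_rewrite 1 [← neg_neg (R.α i)]
      rw [h2]; abel
    rw [two_zsmul]; exact this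
  have h4 := congrArg (fun β => R.pair β (R.αv i)) h3
  simp only [map_zero, AddMonoidHom.zero_apply] at h4
  rw [R.pair_zsmul_left, R.pair_simple] at h4
  norm_num at h4

lemma js_mem_Saf (i : R.I) : R.j (R.s i) ∈ R.Saf := Or.inl ⟨i, rfl⟩

lemma s0_mem_Saf : R.j R.sθ * R.t (-(R.coroot R.θ)) ∈ R.Saf := Or.inr rfl

lemma cf_j (v : R.W) (β : R.P) :
    R.cf (R.j v) β = if R.σP v β ∈ R.Δpos then 0 else 1 := by
  unfold cf
  rw [ξpart_j, wpart_j, map_zero]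
  ring

lemma len_js (i : R.I)
    (hlen1 : ∀ σ ∈ R.Saf, σ = 1 ∨ R.len σ = 1) :
    R.len (R.j (R.s i)) = 1 := by
  rcases hlen1 _ (R.js_mem_Saf i) with h | h
  · exact absurd h (R.js_ne_one i)
  · exact h

lemma si_pos (i : R.I)
    (hlen1 : ∀ σ ∈ R.Saf, σ = 1 ∨ R.len σ = 1)
    {β : R.P} (hβ : β ∈ R.Δpos) (hne : β ≠ R.α i) :
    R.σP (R.s i) β ∈ R.Δpos := by
  have hlen := R.len_js i hlen1
  rw [len_eq] at hlen
  have hαi : R.α i ∈ R.Δpos := R.simple_mem i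
  rw [← Finset.add_sum_erase _ _ hαi] at hlen
  have hterm : (R.cf (R.j (R.s i)) (R.α i)).natAbs = 1 := by
    rw [R.cf_j, if_neg]
    · rfl
    · rw [R.si_alpha]
      exact R.neg_not_pos _ hαi
  rw [hterm] at hlen
  have hz : ∑ β ∈ R.Δpos.erase (R.α i), (R.cf (R.j (R.s i)) β).natAbs = 0 := by omega
  have := (Finset.sum_eq_zero_iff).mp hz β (Finset.mem_erase.mpr ⟨hne, hβ⟩)
  rw [R.cf_j] at this
  by_contra hc
  rw [if_neg hc] at this
  norm_num at this

lemma si_invol (i : R.I) (β : R.P) : R.σP (R.s i) (R.σP (R.s i) β) = β := by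
  rw [R.s_act, R.s_act, map_sub]
  simp only [AddMonoidHom.sub_apply]
  rw [R.pair_zsmul_left, R.pair_simple]
  set k := R.pair β (R.αv i) with hk
  rw [show k - k * 2 = -k by ring, neg_zsmul]
  abel


/-! ### The height functional `⟨·, 2ρ∨⟩` -/

lemma σQv_si_tworhov (i : R.I)
    (hlen1 : ∀ σ ∈ R.Saf, σ = 1 ∨ R.len σ = 1) :
    R.σQv (R.s i) R.tworhov = R.tworhov - (2:ℤ) • R.αv i := by
  have hαi : R.α i ∈ R.Δpos := R.simple_mem i
  unfold tworhov
  rw [map_sum]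
  have hterm : ∀ β ∈ R.Δpos, R.σQv (R.s i) (R.coroot β) = R.coroot (R.σP (R.s i) β) := by
    intro β _
    rw [R.coroot_equivariant]
  rw [Finset.sum_congr rfl hterm]
  rw [← Finset.add_sum_erase _ _ hαi, ← Finset.add_sum_erase _ (fun β => R.coroot β) hαi]
  have h1 : R.coroot (R.σP (R.s i) (R.α i)) = -(R.αv i) := by
    rw [R.si_alpha, R.coroot_neg, R.coroot_simple]
  have h2 : ∑ β ∈ R.Δpos.erase (R.α i), R.coroot (R.σP (R.s i) β)
      = ∑ β ∈ R.Δpos.erase (R.α i), R.coroot β := by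
    refine Finset.sum_nbij' (fun β => R.σP (R.s i) β) (fun β => R.σP (R.s i) β) ?_ ?_ ?_ ?_ ?_
    · intro β hβ
      rw [Finset.mem_erase] at hβ ⊢
      refine ⟨?_, R.si_pos i hlen1 hβ.2 hβ.1⟩
      intro hc
      have := congrArg (R.σP (R.s i)) hc
      rw [R.si_invol, R.si_alpha] at this
      rw [this] at hβ
      exact R.neg_not_pos _ hαi hβ.2
    · intro β hβ
      rw [Finset.mem_erase] at hβ ⊢
      refine ⟨?_, R.si_pos i hlen1 hβ.2 hβ.1⟩
      intro hc
      have := congrArg (R.σP (R.s i)) hc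
      rw [R.si_invol, R.si_alpha] at this
      rw [this] at hβ
      exact R.neg_not_pos _ hαi hβ.2
    · intro β _; exact R.si_invol i β
    · intro β _; exact R.si_invol i β
    · intro β _; rfl
  rw [h1, h2, R.coroot_simple, two_zsmul]
  abel

lemma pair_simple_tworhov (i : R.I)
    (hlen1 : ∀ σ ∈ R.Saf, σ = 1 ∨ R.len σ = 1) :
    R.pair (R.α i) R.tworhov = 2 := by
  have h1' : R.tworhov - R.pair (R.α i) R.tworhov • R.αv i
      = R.tworhov - (2:ℤ) • R.αv i := by
    rw [← R.s_act_v, R.σQv_si_tworhov i hlen1]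
  have h3 : R.pair (R.α i) R.tworhov • R.αv i = (2:ℤ) • R.αv i := by
    exact sub_right_injective h1'
  have h4 : (R.pair (R.α i) R.tworhov - 2) • R.αv i = 0 := by
    rw [sub_zsmul, h3]
    abel
  have h5 := congrArg (fun x => R.pair (R.α i) x) h4
  simp only [map_zero] at h5
  rw [map_zsmul] at h5
  rw [R.pair_simple] at h5
  have : (R.pair (R.α i) R.tworhov - 2) * 2 = 0 := h5
  omega


lemma pair_tworhov_pos
    (hlen1 : ∀ σ ∈ R.Saf, σ = 1 ∨ R.len σ = 1)
    {β : R.P} (hβ : β ∈ R.Δpos) :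
    1 ≤ R.pair β R.tworhov := by
  have key : ∀ x ∈ AddSubmonoid.closure (Set.range R.α),
      0 ≤ R.pair x R.tworhov ∧ (R.pair x R.tworhov = 0 → x = 0) := by
    intro x hx
    induction hx using AddSubmonoid.closure_induction with
    | mem y hy =>
      obtain ⟨i, rfl⟩ := hy
      rw [R.pair_simple_tworhov i hlen1]
      exact ⟨by norm_num, by omega⟩
    | zero => simp
    | add u v hu hv ihu ihv =>
      rw [map_add] at *
      simp only [AddMonoidHom.add_apply]
      constructor
      · omega
      · intro h
        have hu0 : R.pair u R.tworhov = 0 := by omega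
        have hv0 : R.pair v R.tworhov = 0 := by omega
        rw [ihu.2 hu0, ihv.2 hv0, add_zero]
  have h := key β (R.pos_decomp β hβ)
  rcases h with ⟨h0, h1⟩
  rcases eq_or_lt_of_le h0 with h | h
  · exact absurd (h1 h.symm) (R.mem_pos_ne_zero hβ)
  · omega


/-- Sum of a negative affine root and a nonnegative multiple of a negative affine root
is negative, provided it is a (±) affine root. -/
lemma negsum (hlen1 : ∀ σ ∈ R.Saf, σ = 1 ∨ R.len σ = 1)
    {u v : R.V} (m : ℕ) (hu : R.NegA u) (hv : R.NegA v)
    (hrt : R.IsRt (u + (m:ℤ) • v)) : R.NegA (u + (m:ℤ) • v) := by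
  rw [negA_iff] at hu hv ⊢
  have h2 : (u + (m:ℤ) • v).2 = u.2 + (m:ℤ) * v.2 := rfl
  have h1 : (u + (m:ℤ) • v).1 = u.1 + (m:ℤ) • v.1 := rfl
  have hu2 : u.2 ≤ 0 := by rcases hu with h | h <;> omega
  have hv2 : v.2 ≤ 0 := by rcases hv with h | h <;> omega
  rcases lt_or_eq_of_le (show u.2 + (m:ℤ) * v.2 ≤ 0 by nlinarith) with hlt | heq
  · left; omega
  · right
    refine ⟨by omega, ?_⟩
    -- second components are all zero (or m = 0)
    have hu20 : u.2 = 0 := by nlinarith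
    have hum : (m:ℤ) * v.2 = 0 := by omega
    have huneg : -u.1 ∈ R.Δpos := by
      rcases hu with h | h
      · omega
      · exact h.2
    have hpu : R.pair u.1 R.tworhov ≤ -1 := by
      have := R.pair_tworhov_pos hlen1 huneg
      rw [R.pair_neg_left] at this
      omega
    rcases Nat.eq_zero_or_pos m with hm | hm
    · subst hm
      show -(u + ((0:ℕ):ℤ) • v).1 ∈ R.Δpos
      simpa using huneg
    · have hv20 : v.2 = 0 := by
        have hmne : (m:ℤ) ≠ 0 := (Nat.cast_pos.mpr hm).ne'
        exact (mul_eq_zero.mp hum).resolve_left hmne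
      have hvneg : -v.1 ∈ R.Δpos := by
        rcases hv with h | h
        · omega
        · exact h.2
      have hpv : R.pair v.1 R.tworhov ≤ -1 := by
        have := R.pair_tworhov_pos hlen1 hvneg
        rw [R.pair_neg_left] at this
        omega
      -- total pairing is negative, so the finite part cannot be a positive root
      have hptot : R.pair (u + (m:ℤ) • v).1 R.tworhov ≤ -1 := by
        rw [h1, map_add]
        simp only [AddMonoidHom.add_apply]
        rw [R.pair_zsmul_left]
        nlinarith [Nat.cast_nonneg (α := ℤ) m]
      rcases hrt with hpos | hneg
      · exact absurd (R.pair_tworhov_pos hlen1 hpos) (by omega)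
      · exact hneg

lemma negA_iff_not_posA {v : R.V} (hrt : R.IsRt v) : R.NegA v ↔ ¬ R.PosA v := by
  constructor
  · intro hn hp; exact R.not_posA_and_negA hp hn
  · intro hp
    rcases R.posA_or_negA hrt with h | h
    · exact absurd h hp
    · exact h

lemma actW_j (v : R.W) (u : R.V) : R.actW (R.j v) u = (R.σP v u.1, u.2) := by
  unfold actW
  rw [wpart_j, ξpart_j, map_zero]
  simp

/-- a letter package: all data needed about an affine simple reflection -/
structure Pkg (R : AffineRootSetup) (σ : R.Waf) where
  a : R.V
  pa : R.PosPair a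
  refl : R.actW σ a = -a
  shift : ∀ v : R.V, ∃ k : ℤ, R.actW σ v = v - k • a
  pres : ∀ v : R.V, R.PosPair v → v ≠ a → R.PosPair (R.actW σ v)
  len_up : ∀ x : R.Waf, R.PosA (R.actW x a) → R.len (x * σ) = R.len x + 1
  len_down : ∀ x : R.Waf, R.NegA (R.actW x a) → R.len x = R.len (x * σ) + 1

lemma sum_si_erase (i : R.I)
    (hlen1 : ∀ σ ∈ R.Saf, σ = 1 ∨ R.len σ = 1)
    {M : Type*} [AddCommMonoid M] (f : R.P → M) :
    ∑ β ∈ R.Δpos.erase (R.α i), f (R.σP (R.s i) β)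
      = ∑ β ∈ R.Δpos.erase (R.α i), f β := by
  have hαi : R.α i ∈ R.Δpos := R.simple_mem i
  have hmaps : ∀ β ∈ R.Δpos.erase (R.α i), R.σP (R.s i) β ∈ R.Δpos.erase (R.α i) := by
    intro β hβ
    rw [Finset.mem_erase] at hβ ⊢
    refine ⟨?_, R.si_pos i hlen1 hβ.2 hβ.1⟩
    intro hc
    have := congrArg (R.σP (R.s i)) hc
    rw [R.si_invol, R.si_alpha] at this
    rw [this] at hβ
    exact R.neg_not_pos _ hαi hβ.2
  exact Finset.sum_nbij' (fun β => R.σP (R.s i) β) (fun β => R.σP (R.s i) β)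
    hmaps hmaps (fun β _ => R.si_invol i β) (fun β _ => R.si_invol i β) (fun β _ => rfl)

lemma len_si (i : R.I)
    (hlen1 : ∀ σ ∈ R.Saf, σ = 1 ∨ R.len σ = 1) (x : R.Waf) :
    R.len (x * R.j (R.s i)) + (R.cf x (R.α i)).natAbs
      = R.len x + (1 - R.cf x (R.α i)).natAbs := by
  have hαi : R.α i ∈ R.Δpos := R.simple_mem i
  have h1 : R.len (x * R.j (R.s i))
      = (1 - R.cf x (R.α i)).natAbs
        + ∑ β ∈ R.Δpos.erase (R.α i), (R.cf x β).natAbs := by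
    rw [len_eq, ← Finset.add_sum_erase _ _ hαi]
    congr 1
    · rw [R.cf_mul_j, R.si_alpha, R.cf_neg x hαi]
    · rw [show (fun β => (R.cf (x * R.j (R.s i)) β).natAbs)
          = fun β => (R.cf x (R.σP (R.s i) β)).natAbs from funext fun β => by rw [R.cf_mul_j]]
      exact R.sum_si_erase i hlen1 (fun γ => (R.cf x γ).natAbs)
  have h2 : R.len x
      = (R.cf x (R.α i)).natAbs + ∑ β ∈ R.Δpos.erase (R.α i), (R.cf x β).natAbs := by
    rw [len_eq, ← Finset.add_sum_erase _ _ hαi]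
  omega

lemma posA_act_si (i : R.I) (x : R.Waf) :
    R.PosA (R.actW x (R.α i, 0)) ↔ R.cf x (R.α i) ≤ 0 := by
  unfold actW PosA cf
  simp only [map_zero]
  by_cases h : R.σP (R.wpart x) (R.α i) ∈ R.Δpos
  · rw [if_pos h]
    constructor
    · rintro (h' | ⟨h', _⟩) <;> omega
    · intro h'
      rcases lt_or_eq_of_le h' with h'' | h''
      · left; omega
      · right; exact ⟨by omega, h⟩
  · rw [if_neg h]
    constructor
    · rintro (h' | ⟨h', hmem⟩)
      · omega
      · exact absurd hmem h
    · intro h'; left; omega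

lemma negA_act_si (i : R.I) (x : R.Waf) :
    R.NegA (R.actW x (R.α i, 0)) ↔ 1 ≤ R.cf x (R.α i) := by
  have hrt : R.IsRt ((R.α i, 0) : R.V) := Or.inl (R.simple_mem i)
  rw [R.negA_iff_not_posA (R.isRt_actW x hrt), R.posA_act_si]
  omega

noncomputable def pkg_si (i : R.I)
    (hlen1 : ∀ σ ∈ R.Saf, σ = 1 ∨ R.len σ = 1) :
    Pkg R (R.j (R.s i)) where
  a := (R.α i, 0)
  pa := ⟨Or.inl (R.simple_mem i), Or.inr ⟨rfl, R.simple_mem i⟩⟩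
  refl := by
    rw [R.actW_j, R.si_alpha]
    rfl
  shift := by
    intro v
    refine ⟨R.pair v.1 (R.αv i), ?_⟩
    rw [R.actW_j, R.s_act]
    refine Prod.ext rfl ?_
    show v.2 = v.2 - R.pair v.1 (R.αv i) * 0
    ring
  pres := by
    intro v hv hne
    rw [R.actW_j]
    rcases hv with ⟨hrt, hpos⟩
    constructor
    · exact R.isRt_actW (R.j (R.s i)) hrt |>.imp (by rw [R.actW_j]; exact id) (by rw [R.actW_j]; exact id)
    · rcases hpos with h | ⟨h0, hmem⟩
      · left; exact h
      · right
        refine ⟨h0, ?_⟩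
        refine R.si_pos i hlen1 hmem ?_
        intro hc
        apply hne
        exact Prod.ext hc h0
  len_up := by
    intro x hp
    rw [R.posA_act_si] at hp
    have := R.len_si i hlen1 x
    have hn : (1 - R.cf x (R.α i)).natAbs = (R.cf x (R.α i)).natAbs + 1 := by omega
    omega
  len_down := by
    intro x hn
    rw [R.negA_act_si] at hn
    have := R.len_si i hlen1 x
    have hh : (1 - R.cf x (R.α i)).natAbs + 1 = (R.cf x (R.α i)).natAbs := by omega
    omega


/-! ### The affine reflection `s₀` -/

/-- the affine simple reflection `s₀` -/
noncomputable def s0 : R.Waf := R.j R.sθ * R.t (-(R.coroot R.θ))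

lemma cf_one (γ : R.P) : R.cf 1 γ = if γ ∈ R.Δpos then 0 else 1 := by
  unfold cf
  simp only [ξpart_one, wpart_one, map_zero, map_one, AddAut.groupCompat_one_apply, zero_add]

lemma cf_mul_s0 (x : R.Waf) (β : R.P) :
    R.cf (x * R.s0) β = R.cf x (R.σP R.sθ β) - R.pair β (R.coroot R.θ) := by
  unfold s0
  rw [← mul_assoc, R.cf_mul_t, R.cf_mul_j, map_neg]
  rfl

lemma cf_s0 (β : R.P) :
    R.cf R.s0 β = (if R.σP R.sθ β ∈ R.Δpos then 0 else 1) - R.pair β (R.coroot R.θ) := by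
  have := R.cf_mul_s0 1 β
  rw [one_mul] at this
  rw [this, R.cf_one]

lemma T_ne_one : R.pair R.θ (R.coroot R.θ) ≠ 1 := by
  intro h
  have h2 : R.σP R.sθ R.θ = 0 := by
    rw [R.sθ_act, h, one_zsmul, sub_self]
  rcases R.root_stable R.sθ R.θ R.θ_mem with h3 | h3 <;>
    rw [h2] at h3
  · exact R.zero_notin_pos h3
  · rw [neg_zero] at h3; exact R.zero_notin_pos h3

/-- classification of positive roots relative to `θ`, from `len s₀ = 1`. -/
lemma s0_classify (hl : R.len R.s0 = 1) :
    R.pair R.θ (R.coroot R.θ) = 2 ∧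
    (∀ β ∈ R.Δpos, β ≠ R.θ →
      (R.pair β (R.coroot R.θ) = 0 ∧ R.σP R.sθ β = β) ∨
      (R.pair β (R.coroot R.θ) = 1 ∧ R.θ - β ∈ R.Δpos)) := by
  set θv := R.coroot R.θ with hθv
  -- extract the unique exceptional root
  rw [len_eq] at hl
  have hex : ∃ β₀ ∈ R.Δpos, (R.cf R.s0 β₀).natAbs = 1 ∧
      ∀ β ∈ R.Δpos, β ≠ β₀ → R.cf R.s0 β = 0 := by
    have hne : ∃ β₀ ∈ R.Δpos, (R.cf R.s0 β₀).natAbs ≠ 0 := by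
      by_contra hc
      push_neg at hc
      rw [Finset.sum_eq_zero (fun β hβ => hc β hβ)] at hl
      omega
    obtain ⟨β₀, hβ₀, hne0⟩ := hne
    rw [← Finset.add_sum_erase _ _ hβ₀] at hl
    have hz : ∑ β ∈ R.Δpos.erase β₀, (R.cf R.s0 β).natAbs = 0 := by omega
    refine ⟨β₀, hβ₀, by omega, fun β hβ hne => ?_⟩
    have := (Finset.sum_eq_zero_iff).mp hz β (Finset.mem_erase.mpr ⟨hne, hβ⟩)
    omega
  obtain ⟨β₀, hβ₀, habs, hzero⟩ := hex
  -- non-exceptional roots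
  have nonexc : ∀ β ∈ R.Δpos, β ≠ β₀ →
      (R.pair β θv = 0 ∧ R.σP R.sθ β = β) ∨
      (R.pair β θv = 1 ∧ R.σP R.sθ β = β - R.θ ∧ R.θ - β ∈ R.Δpos) := by
    intro β hβ hne
    have h0 := hzero β hβ hne
    rw [R.cf_s0, ← hθv] at h0
    by_cases hin : R.σP R.sθ β ∈ R.Δpos
    · rw [if_pos hin] at h0
      have ht : R.pair β θv = 0 := by omega
      left
      refine ⟨ht, ?_⟩
      rw [R.sθ_act, ← hθv, ht, zero_zsmul, sub_zero]
    · rw [if_neg hin] at h0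
      have ht : R.pair β θv = 1 := by omega
      right
      have hs : R.σP R.sθ β = β - R.θ := by
        rw [R.sθ_act, ← hθv, ht, one_zsmul]
      refine ⟨ht, hs, ?_⟩
      rcases R.root_stable R.sθ β hβ with h' | h'
      · exact absurd h' hin
      · rw [hs, neg_sub] at h'
        exact h'
  have hθne0 : R.θ ≠ 0 := R.mem_pos_ne_zero R.θ_mem
  have pair_sub : ∀ a b : R.P, R.pair (a - b) θv = R.pair a θv - R.pair b θv := by
    intro a b; rw [map_sub]; rfl
  have pair_add : ∀ a b : R.P, R.pair (a + b) θv = R.pair a θv + R.pair b θv := by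
    intro a b; rw [map_add]; rfl
  have tval : ∀ ε ∈ R.Δpos, ε ≠ β₀ → R.pair ε θv = 0 ∨ R.pair ε θv = 1 := by
    intro ε h hn
    rcases nonexc ε h hn with h' | h'
    · exact Or.inl h'.1
    · exact Or.inr h'.1
  have hθcase : R.θ ≠ β₀ → R.pair R.θ θv = 0 := by
    intro hne
    rcases tval R.θ R.θ_mem hne with h | h
    · exact h
    · exact absurd h R.T_ne_one
  -- the exceptional root must be θ with ⟨θ,θ∨⟩ = 2
  have hmain : β₀ = R.θ ∧ R.pair R.θ θv = 2 := by
    have hcf := habs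
    rw [R.cf_s0, ← hθv] at hcf
    by_cases hin : R.σP R.sθ β₀ ∈ R.Δpos
    · exfalso
      rw [if_pos hin] at hcf
      have hpm : R.pair β₀ θv = 1 ∨ R.pair β₀ θv = -1 := by omega
      rcases hpm with ht | ht
      · -- t β₀ = 1 : ε := β₀ - θ ∈ Δpos
        have hβ₀θ : β₀ ≠ R.θ := fun hc => R.T_ne_one (by rw [← hθv, ← hc]; exact ht)
        have hT : R.pair R.θ θv = 0 := hθcase (Ne.symm hβ₀θ)
        have hε : R.σP R.sθ β₀ = β₀ - R.θ := by rw [R.sθ_act, ← hθv, ht, one_zsmul]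
        have hεpos : β₀ - R.θ ∈ R.Δpos := by rw [← hε]; exact hin
        have htε : R.pair (β₀ - R.θ) θv = 1 := by rw [pair_sub]; omega
        have hεβ₀ : β₀ - R.θ ≠ β₀ := by
          intro hc; exact hθne0 (sub_eq_self.mp hc)
        rcases nonexc _ hεpos hεβ₀ with h' | h'
        · omega
        · obtain ⟨_, _, hδpos⟩ := h'
          have htδ : R.pair (R.θ - (β₀ - R.θ)) θv = -1 := by rw [pair_sub]; omega
          have hδβ₀ : R.θ - (β₀ - R.θ) ≠ β₀ := by
            intro hc
            rw [hc] at htδ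
            omega
          rcases tval _ hδpos hδβ₀ with h'' | h'' <;> omega
      · -- t β₀ = -1 : ε := β₀ + θ ∈ Δpos
        have hε : R.σP R.sθ β₀ = β₀ + R.θ := by
          rw [R.sθ_act, ← hθv, ht, neg_zsmul, one_zsmul, sub_neg_eq_add]
        have hεpos : β₀ + R.θ ∈ R.Δpos := by rw [← hε]; exact hin
        have hεβ₀ : β₀ + R.θ ≠ β₀ := by
          intro hc
          exact hθne0 (by rwa [add_eq_left] at hc)
        have hT : R.pair R.θ θv = -1 ∨ R.pair R.θ θv = 0 := by
          by_cases hbθ : β₀ = R.θ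
          · left; rw [← hbθ]; exact ht
          · right; exact hθcase (Ne.symm hbθ)
        have htε : R.pair (β₀ + R.θ) θv ≤ -1 := by rw [pair_add]; omega
        rcases tval _ hεpos hεβ₀ with h'' | h'' <;> omega
    · rw [if_neg hin] at hcf
      have hpm : R.pair β₀ θv = 0 ∨ R.pair β₀ θv = 2 := by omega
      rcases hpm with ht | ht
      · exfalso
        have hε : R.σP R.sθ β₀ = β₀ := by rw [R.sθ_act, ← hθv, ht, zero_zsmul, sub_zero]
        rw [hε] at hin
        exact hin hβ₀
      · by_cases hbθ : β₀ = R.θ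
        · exact ⟨hbθ, by rw [← hbθ]; exact ht⟩

        · exfalso
          have hT : R.pair R.θ θv = 0 := hθcase (Ne.symm hbθ)
          have hε : R.σP R.sθ β₀ = β₀ - (2:ℤ) • R.θ := by rw [R.sθ_act, ← hθv, ht]
          have hnegpos : -(β₀ - (2:ℤ) • R.θ) ∈ R.Δpos := by
            rcases R.root_stable R.sθ β₀ hβ₀ with h' | h'
            · exact absurd h' hin
            · rwa [hε] at h'
          rw [neg_sub] at hnegpos
          have htε : R.pair ((2:ℤ) • R.θ - β₀) θv = -2 := by
            rw [pair_sub, R.pair_zsmul_left]; omega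
          have hεβ₀ : (2:ℤ) • R.θ - β₀ ≠ β₀ := by
            intro hc
            have := congrArg (fun z => R.pair z θv) hc
            rw [htε] at this
            omega
          rcases tval _ hnegpos hεβ₀ with h'' | h'' <;> omega
  obtain ⟨hb, hT2⟩ := hmain
  refine ⟨hT2, ?_⟩
  intro β hβ hne
  have hne' : β ≠ β₀ := by rw [hb]; exact hne
  rcases nonexc β hβ hne' with h | h
  · exact Or.inl ⟨h.1, h.2⟩
  · exact Or.inr ⟨h.1, h.2.2⟩

lemma actW_s0 (v : R.V) :
    R.actW R.s0 v = (R.σP R.sθ v.1, v.2 + R.pair v.1 (R.coroot R.θ)) := by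
  unfold actW s0
  rw [wpart_mul, wpart_j, wpart_t, mul_one, ξpart_mul_t, ξpart_j, zero_add, map_neg]
  refine Prod.ext rfl ?_
  show v.2 - -(R.pair v.1 (R.coroot R.θ)) = v.2 + R.pair v.1 (R.coroot R.θ)
  ring

lemma sθ_neg_θ (hT : R.pair R.θ (R.coroot R.θ) = 2) : R.σP R.sθ R.θ = -R.θ := by
  rw [R.sθ_act, hT, two_zsmul]
  abel

section S0Pkg

variable (hT : R.pair R.θ (R.coroot R.θ) = 2)
variable (hcl : ∀ β ∈ R.Δpos, β ≠ R.θ →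
      (R.pair β (R.coroot R.θ) = 0 ∧ R.σP R.sθ β = β) ∨
      (R.pair β (R.coroot R.θ) = 1 ∧ R.θ - β ∈ R.Δpos))

include hT hcl in
lemma len_s0 (x : R.Waf) :
    R.len (x * R.s0) + (R.cf x R.θ).natAbs
      = R.len x + (1 + R.cf x R.θ).natAbs := by
  classical
  set θv := R.coroot R.θ with hθv
  have hσθ : R.σP R.sθ R.θ = -R.θ := R.sθ_neg_θ hT
  set φ : R.P → R.P := fun β => if R.pair β θv = 0 then β else R.θ - β with hφ
  have hmaps : ∀ β ∈ R.Δpos.erase R.θ, φ β ∈ R.Δpos.erase R.θ := by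
    intro β hβ
    rw [Finset.mem_erase] at hβ ⊢
    obtain ⟨hne, hmem⟩ := hβ
    rcases hcl β hmem hne with ⟨ht, hfix⟩ | ⟨ht, hpos⟩
    · rw [hφ]
      simp only
      rw [if_pos ht]
      exact ⟨hne, hmem⟩
    · rw [hφ]
      simp only
      rw [if_neg (by omega)]
      refine ⟨?_, hpos⟩
      intro hc
      exact R.mem_pos_ne_zero hmem (by rwa [sub_eq_self] at hc)
  have hinvol : ∀ β ∈ R.Δpos.erase R.θ, φ (φ β) = β := by
    intro β hβ
    rw [Finset.mem_erase] at hβ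
    obtain ⟨hne, hmem⟩ := hβ
    rcases hcl β hmem hne with ⟨ht, hfix⟩ | ⟨ht, hpos⟩
    · rw [hφ]; simp only; rw [if_pos ht, if_pos ht]
    · rw [hφ]; simp only
      have hne0 : ¬ (R.pair β θv = 0) := by omega
      rw [if_neg hne0]
      have ht2 : R.pair (R.θ - β) θv = 1 := by
        rw [map_sub]
        simp only [AddMonoidHom.sub_apply]
        omega
      have hne0' : ¬ (R.pair (R.θ - β) θv = 0) := by omega
      rw [if_neg hne0', sub_sub_cancel]
  have h1 : R.len (x * R.s0)
      = (1 + R.cf x R.θ).natAbs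
        + ∑ β ∈ R.Δpos.erase R.θ, (R.cf x β).natAbs := by
    rw [len_eq, ← Finset.add_sum_erase _ _ R.θ_mem]
    congr 1
    · rw [R.cf_mul_s0, hσθ, R.cf_neg x R.θ_mem, ← hθv, hT]
      rw [show 1 - R.cf x R.θ - 2 = -(1 + R.cf x R.θ) by ring, Int.natAbs_neg]
    · have hterm : ∀ β ∈ R.Δpos.erase R.θ,
          (R.cf (x * R.s0) β).natAbs = (R.cf x (φ β)).natAbs := by
        intro β hβ
        rw [Finset.mem_erase] at hβ
        obtain ⟨hne, hmem⟩ := hβ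
        rw [R.cf_mul_s0, ← hθv]
        rcases hcl β hmem hne with ⟨ht, hfix⟩ | ⟨ht, hpos⟩
        · rw [hfix, ht, sub_zero, hφ]
          simp only
          rw [if_pos ht]
        · have hσ : R.σP R.sθ β = β - R.θ := by
            rw [R.sθ_act, ← hθv, ht, one_zsmul]
          rw [hσ, ht, show β - R.θ = -(R.θ - β) by abel, R.cf_neg x hpos, hφ]
          simp only
          rw [if_neg (by omega)]
          rw [show 1 - R.cf x (R.θ - β) - 1 = -(R.cf x (R.θ - β)) by ring, Int.natAbs_neg]
      rw [Finset.sum_congr rfl hterm]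
      exact Finset.sum_nbij' φ φ hmaps hmaps hinvol hinvol (fun β _ => rfl)
  have h2 : R.len x
      = (R.cf x R.θ).natAbs + ∑ β ∈ R.Δpos.erase R.θ, (R.cf x β).natAbs := by
    rw [len_eq, ← Finset.add_sum_erase _ _ R.θ_mem]
  omega

end S0Pkg

lemma posA_act_s0 (x : R.Waf) :
    R.PosA (R.actW x ((-R.θ, 1) : R.V)) ↔ 0 ≤ R.cf x R.θ := by
  have hu : R.actW x ((-R.θ, 1) : R.V)
      = (-(R.σP (R.wpart x) R.θ), 1 + R.pair R.θ (R.ξpart x)) := by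
    unfold actW
    rw [map_neg, R.pair_neg_left]
    refine Prod.ext rfl ?_
    show 1 - -(R.pair R.θ (R.ξpart x)) = 1 + R.pair R.θ (R.ξpart x)
    ring
  rw [hu]
  unfold PosA cf
  simp only
  by_cases h : R.σP (R.wpart x) R.θ ∈ R.Δpos
  · rw [if_pos h]
    have hnp : -(R.σP (R.wpart x) R.θ) ∉ R.Δpos := R.neg_not_pos _ h
    constructor
    · rintro (h' | ⟨h', hmem⟩)
      · omega
      · exact absurd hmem hnp
    · intro h'; left; omega
  · rw [if_neg h]
    have hnp : -(R.σP (R.wpart x) R.θ) ∈ R.Δpos := by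
      rcases R.dichot (R.wpart x) R.θ_mem with h' | h'
      · exact absurd h'.1 h
      · exact h'.2
    constructor
    · rintro (h' | ⟨h', _⟩) <;> omega
    · intro h'
      have h0 : 0 ≤ 1 + R.pair R.θ (R.ξpart x) := by omega
      rcases lt_or_eq_of_le h0 with h'' | h''
      · left; exact h''
      · right; exact ⟨h''.symm, hnp⟩

lemma isRt_negθ : R.IsRt ((-R.θ, 1) : R.V) := by
  right
  show -(-R.θ) ∈ R.Δpos
  rw [neg_neg]
  exact R.θ_mem

lemma negA_act_s0 (x : R.Waf) :
    R.NegA (R.actW x ((-R.θ, 1) : R.V)) ↔ R.cf x R.θ ≤ -1 := by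
  rw [R.negA_iff_not_posA (R.isRt_actW x R.isRt_negθ), R.posA_act_s0]
  omega


section S0Pkg2

variable (hT : R.pair R.θ (R.coroot R.θ) = 2)
variable (hcl : ∀ β ∈ R.Δpos, β ≠ R.θ →
      (R.pair β (R.coroot R.θ) = 0 ∧ R.σP R.sθ β = β) ∨
      (R.pair β (R.coroot R.θ) = 1 ∧ R.θ - β ∈ R.Δpos))

include hT hcl in
lemma pres_s0 (v : R.V) (hv : R.PosPair v) (hne : v ≠ ((-R.θ, 1) : R.V)) :
    R.PosPair (R.actW R.s0 v) := by
  obtain ⟨hrt, hpos⟩ := hv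
  rw [R.actW_s0]
  by_cases hγ : v.1 ∈ R.Δpos
  · have hn0 : 0 ≤ v.2 := by
      rcases hpos with h | ⟨h, _⟩ <;> omega
    by_cases hθeq : v.1 = R.θ
    · rw [hθeq, R.sθ_neg_θ hT, hT]
      exact ⟨Or.inr (by rw [neg_neg]; exact R.θ_mem), Or.inl (by omega)⟩
    · rcases hcl v.1 hγ hθeq with ⟨ht, hfix⟩ | ⟨ht, hp⟩
      · rw [hfix, ht, add_zero]
        exact ⟨Or.inl hγ, hpos⟩
      · have hσ : R.σP R.sθ v.1 = v.1 - R.θ := by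
          rw [R.sθ_act, ht, one_zsmul]
        rw [hσ, ht]
        refine ⟨Or.inr ?_, Or.inl (by omega)⟩
        rw [neg_sub]
        exact hp
  · have hδ : -v.1 ∈ R.Δpos := by
      rcases hrt with h | h
      · exact absurd h hγ
      · exact h
    have hn0 : 0 < v.2 := by
      rcases hpos with h | ⟨_, hmem⟩
      · exact h
      · exact absurd hmem hγ
    have hσneg : R.σP R.sθ v.1 = -(R.σP R.sθ (-v.1)) := by
      rw [map_neg, neg_neg]
    have hpair : R.pair v.1 (R.coroot R.θ) = -(R.pair (-v.1) (R.coroot R.θ)) := by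
      rw [R.pair_neg_left, neg_neg]
    by_cases hθeq : -v.1 = R.θ
    · -- v.1 = -θ, so v.2 ≥ 2
      have hv1 : v.1 = -R.θ := by rw [← hθeq, neg_neg]
      have hn2 : v.2 ≠ 1 := by
        intro hc
        exact hne (Prod.ext hv1 hc)
      rw [hσneg, hθeq, R.sθ_neg_θ hT, neg_neg, hpair, hθeq, hT]
      refine ⟨Or.inl R.θ_mem, ?_⟩
      rcases lt_or_eq_of_le (show (0:ℤ) ≤ v.2 + -2 by omega) with h | h
      · exact Or.inl h
      · exact Or.inr ⟨h.symm, R.θ_mem⟩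
    · rcases hcl (-v.1) hδ hθeq with ⟨ht, hfix⟩ | ⟨ht, hp⟩
      · rw [hσneg, hfix, neg_neg, hpair, ht, neg_zero, add_zero]
        exact ⟨hrt, hpos⟩
      · have hσ : R.σP R.sθ (-v.1) = -v.1 - R.θ := by
          rw [R.sθ_act, ht, one_zsmul]
        rw [hσneg, hσ, hpair, ht]
        refine ⟨Or.inl ?_, ?_⟩
        · rw [show -(-v.1 - R.θ) = R.θ - -v.1 by abel]
          exact hp
        · rcases lt_or_eq_of_le (show (0:ℤ) ≤ v.2 + -1 by omega) with h | h
          · exact Or.inl h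
          · refine Or.inr ⟨h.symm, ?_⟩
            rw [show -(-v.1 - R.θ) = R.θ - -v.1 by abel]
            exact hp

end S0Pkg2

/-- the `s₀` letter is either trivial or admits a package -/
lemma pkg_s0
    (hlen1 : ∀ σ ∈ R.Saf, σ = 1 ∨ R.len σ = 1) :
    R.s0 = 1 ∨ Nonempty (Pkg R R.s0) := by
  rcases Classical.em (R.s0 = 1) with h1 | h1
  · exact Or.inl h1
  · have hl : R.len R.s0 = 1 := by
      rcases hlen1 R.s0 R.s0_mem_Saf with h | h
      · exact absurd h h1
      · exact h
    obtain ⟨hT, hcl⟩ := R.s0_classify hl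
    refine Or.inr ⟨?_⟩
    exact
    { a := ((-R.θ, 1) : R.V)
      pa := ⟨R.isRt_negθ, Or.inl one_pos⟩
      refl := by
        rw [R.actW_s0]
        show (R.σP R.sθ (-R.θ), 1 + R.pair (-R.θ) (R.coroot R.θ)) = _
        rw [map_neg, R.sθ_neg_θ hT, neg_neg, R.pair_neg_left, hT]
        rw [show -((-R.θ, 1) : R.V) = (R.θ, -1) by rw [Prod.neg_mk, neg_neg]]
        refine Prod.ext rfl ?_
        show 1 + -2 = -(1:ℤ)
        ring
      shift := by
        intro v
        refine ⟨-(R.pair v.1 (R.coroot R.θ)), ?_⟩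
        rw [R.actW_s0]
        refine Prod.ext ?_ ?_
        · show R.σP R.sθ v.1 = v.1 - (-(R.pair v.1 (R.coroot R.θ))) • (-R.θ)
          rw [R.sθ_act, neg_zsmul, zsmul_neg, neg_neg]
        · show v.2 + R.pair v.1 (R.coroot R.θ) = v.2 - (-(R.pair v.1 (R.coroot R.θ))) * 1
          ring
      pres := fun v hv hne => R.pres_s0 hT hcl v hv hne
      len_up := by
        intro x hp
        rw [R.posA_act_s0] at hp
        have := R.len_s0 hT hcl x
        have hn : (1 + R.cf x R.θ).natAbs = (R.cf x R.θ).natAbs + 1 := by omega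
        omega
      len_down := by
        intro x hn
        rw [R.negA_act_s0] at hn
        have := R.len_s0 hT hcl x
        have hh : (1 + R.cf x R.θ).natAbs + 1 = (R.cf x R.θ).natAbs := by omega
        omega }


lemma letter_pkg (hlen1 : ∀ σ ∈ R.Saf, σ = 1 ∨ R.len σ = 1)
    {σ : R.Waf} (hσ : σ ∈ R.Saf) : σ = 1 ∨ Nonempty (Pkg R σ) := by
  rcases hσ with ⟨i, rfl⟩ | h
  · exact Or.inr ⟨R.pkg_si i hlen1⟩
  · rw [Set.mem_singleton_iff] at h
    subst h
    exact R.pkg_s0 hlen1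

lemma len_mul_letter (hlen1 : ∀ σ ∈ R.Saf, σ = 1 ∨ R.len σ = 1)
    {σ : R.Waf} (hσ : σ ∈ R.Saf) (x : R.Waf) :
    R.len (x * σ) ≤ R.len x + 1 ∧ R.len x ≤ R.len (x * σ) + 1 := by
  rcases R.letter_pkg hlen1 hσ with h1 | hp
  · subst h1
    rw [mul_one]
    omega
  · obtain ⟨p⟩ := hp
    rcases R.posA_or_negA (R.isRt_actW x p.pa.1) with h | h
    · have := p.len_up x h
      omega
    · have := p.len_down x h
      omega

section Fold

variable {R}
variable (dstar : R.Waf → R.Waf → R.Waf)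
variable (hsimple : ∀ (y : R.Waf), ∀ σ ∈ R.Saf,
      dstar y σ = if R.len (y * σ) = R.len y + 1 then y * σ else y)
variable (hlen1 : ∀ σ ∈ R.Saf, σ = 1 ∨ R.len σ = 1)

include hsimple in
lemma dstar_cases {σ : R.Waf} (hσ : σ ∈ R.Saf) (z : R.Waf) :
    (R.len (z * σ) = R.len z + 1 ∧ dstar z σ = z * σ) ∨
    (R.len (z * σ) ≠ R.len z + 1 ∧ dstar z σ = z) := by
  rw [hsimple z σ hσ]
  by_cases h : R.len (z * σ) = R.len z + 1
  · left; exact ⟨h, if_pos h⟩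
  · right; exact ⟨h, if_neg h⟩

include hsimple in
lemma len_fold_le (l : List R.Waf) (hl : ∀ σ ∈ l, σ ∈ R.Saf) (z : R.Waf) :
    R.len (List.foldl dstar z l) ≤ R.len z + l.length := by
  induction l generalizing z with
  | nil => simp
  | cons σ l ih =>
    rw [List.foldl_cons]
    have h1 : R.len (dstar z σ) ≤ R.len z + 1 := by
      rcases dstar_cases dstar hsimple (hl σ (by simp)) z with ⟨h, he⟩ | ⟨h, he⟩ <;> rw [he]
      · omega
      · omega
    have h2 := ih (fun σ' hσ' => hl σ' (by simp [hσ'])) (dstar z σ)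
    simp only [List.length_cons]
    omega

include hlen1 in
lemma len_mul_prod_le (l : List R.Waf) (hl : ∀ σ ∈ l, σ ∈ R.Saf) (z : R.Waf) :
    R.len (z * l.prod) ≤ R.len z + l.length := by
  induction l generalizing z with
  | nil => simp
  | cons σ l ih =>
    rw [List.prod_cons, ← mul_assoc]
    have h1 := (R.len_mul_letter hlen1 (hl σ (by simp)) z).1
    have h2 := ih (fun σ' hσ' => hl σ' (by simp [hσ'])) (z * σ)
    simp only [List.length_cons]
    omega

include hsimple hlen1 in
lemma fold_eq_prod_of_len (l : List R.Waf) (hl : ∀ σ ∈ l, σ ∈ R.Saf) (z : R.Waf)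
    (h : R.len (z * l.prod) = R.len z + l.length) :
    List.foldl dstar z l = z * l.prod := by
  induction l generalizing z with
  | nil => simp
  | cons σ l ih =>
    rw [List.prod_cons, ← mul_assoc] at h ⊢
    rw [List.foldl_cons]
    have hσ := hl σ (by simp)
    have hl' : ∀ σ' ∈ l, σ' ∈ R.Saf := fun σ' hσ' => hl σ' (by simp [hσ'])
    have h2 := len_mul_prod_le hlen1 l hl' (z * σ)
    have h1 := (R.len_mul_letter hlen1 hσ z).1
    simp only [List.length_cons] at h
    have hstep : R.len (z * σ) = R.len z + 1 := by omega
    have hd : dstar z σ = z * σ := by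
      rcases dstar_cases dstar hsimple hσ z with ⟨_, he⟩ | ⟨hne, _⟩
      · exact he
      · exact absurd hstep hne
    rw [hd]
    exact ih hl' (z * σ) (by omega)

include hsimple hlen1 in
lemma fold_eq_prod_of_fold_len (l : List R.Waf) (hl : ∀ σ ∈ l, σ ∈ R.Saf) (z : R.Waf)
    (h : R.len (List.foldl dstar z l) = R.len z + l.length) :
    List.foldl dstar z l = z * l.prod := by
  induction l generalizing z with
  | nil => simp
  | cons σ l ih =>
    rw [List.foldl_cons] at h ⊢
    rw [List.prod_cons, ← mul_assoc]
    have hσ := hl σ (by simp)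
    have hl' : ∀ σ' ∈ l, σ' ∈ R.Saf := fun σ' hσ' => hl σ' (by simp [hσ'])
    simp only [List.length_cons] at h
    rcases dstar_cases dstar hsimple hσ z with ⟨hs, he⟩ | ⟨hne, he⟩
    · rw [he] at h ⊢
      exact ih hl' (z * σ) (by omega)
    · rw [he] at h
      have := len_fold_le dstar hsimple l hl' z
      omega

end Fold


/-- domination of inversion sets -/
def Mono (z' z : R.Waf) : Prop :=
  ∀ a : R.V, R.PosPair a → R.NegA (R.actW z' a) → R.NegA (R.actW z a)

lemma negA_neg_iff (v : R.V) : R.NegA (-v) ↔ R.PosA v := by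
  unfold NegA
  rw [neg_neg]

section Fold2

variable {R}
variable (dstar : R.Waf → R.Waf → R.Waf)
variable (hsimple : ∀ (y : R.Waf), ∀ σ ∈ R.Saf,
      dstar y σ = if R.len (y * σ) = R.len y + 1 then y * σ else y)
variable (hlen1 : ∀ σ ∈ R.Saf, σ = 1 ∨ R.len σ = 1)

include hsimple hlen1 in
lemma mono_step {σ : R.Waf} (hσ : σ ∈ R.Saf) {z' z : R.Waf}
    (hmono : R.Mono z' z) : R.Mono (dstar z' σ) (dstar z σ) := by
  rcases R.letter_pkg hlen1 hσ with h1 | hp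
  · subst h1
    have hz : ∀ u : R.Waf, dstar u 1 = u := by
      intro u
      rcases dstar_cases dstar hsimple hσ u with ⟨h, _⟩ | ⟨_, he⟩
      · rw [mul_one] at h; omega
      · exact he
    rw [hz, hz]
    exact hmono
  obtain ⟨p⟩ := hp
  have hrtz' := R.isRt_actW z' p.pa.1
  have hrtz := R.isRt_actW z p.pa.1
  have dmul : ∀ u : R.Waf, R.PosA (R.actW u p.a) → dstar u σ = u * σ := by
    intro u hu
    rcases dstar_cases dstar hsimple hσ u with ⟨_, he⟩ | ⟨hne, _⟩
    · exact he
    · exact absurd (p.len_up u hu) hne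
  have dstall : ∀ u : R.Waf, R.NegA (R.actW u p.a) → dstar u σ = u := by
    intro u hu
    rcases dstar_cases dstar hsimple hσ u with ⟨hl, _⟩ | ⟨_, he⟩
    · have := p.len_down u hu
      omega
    · exact he
  rcases R.posA_or_negA hrtz' with hz'p | hz'n
  · -- z' multiplies
    rcases R.posA_or_negA hrtz with hzp | hzn
    · -- both multiply
      rw [dmul z' hz'p, dmul z hzp]
      intro a pa hneg
      rw [R.actW_mul] at hneg ⊢
      by_cases haσ : a = p.a
      · subst haσ
        rw [p.refl, R.actW_neg, R.negA_neg_iff] at hneg ⊢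
        exact hzp
      · exact hmono _ (p.pres a pa haσ) hneg
    · -- z stalls, z' multiplies
      rw [dmul z' hz'p, dstall z hzn]
      intro a pa hneg
      by_cases haσ : a = p.a
      · subst haσ
        exact hzn
      · rw [R.actW_mul] at hneg
        obtain ⟨k, hk⟩ := p.shift a
        have hca : a = R.actW σ a + k • p.a := by rw [hk]; abel
        have pac : R.PosPair (R.actW σ a) := p.pres a pa haσ
        by_cases hkpos : 0 ≤ k
        · have hdecomp : R.actW z a
              = R.actW z (R.actW σ a) + ((k.toNat : ℤ)) • R.actW z p.a := by
            rw [Int.toNat_of_nonneg hkpos]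
            conv_lhs => rw [hca]
            rw [R.actW_add, R.actW_zsmul]
          rw [hdecomp]
          refine R.negsum hlen1 k.toNat (hmono _ pac hneg) hzn ?_
          rw [← hdecomp]
          exact R.isRt_actW z pa.1
        · push_neg at hkpos
          have hdecomp : R.actW z' a
              = R.actW z' (R.actW σ a) + (((-k).toNat : ℤ)) • (-(R.actW z' p.a)) := by
            rw [Int.toNat_of_nonneg (by omega : (0:ℤ) ≤ -k)]
            conv_lhs => rw [hca]
            rw [R.actW_add, R.actW_zsmul]
            rw [smul_neg, ← neg_zsmul, neg_neg]
          have hna : R.NegA (R.actW z' a) := by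
            rw [hdecomp]
            refine R.negsum hlen1 (-k).toNat hneg ?_ ?_
            · rw [R.negA_neg_iff]
              exact hz'p
            · rw [← hdecomp]
              exact R.isRt_actW z' pa.1
          exact hmono a pa hna
  · -- z' stalls, hence z stalls
    have hzn : R.NegA (R.actW z p.a) := hmono _ p.pa hz'n
    rw [dstall z' hz'n, dstall z hzn]
    exact hmono

include hsimple hlen1 in
lemma mono_fold (l : List R.Waf) (hl : ∀ σ ∈ l, σ ∈ R.Saf) {z' z : R.Waf}
    (hmono : R.Mono z' z) :
    R.Mono (List.foldl dstar z' l) (List.foldl dstar z l) := by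
  induction l generalizing z' z with
  | nil => exact hmono
  | cons σ l ih =>
    rw [List.foldl_cons, List.foldl_cons]
    exact ih (fun σ' hσ' => hl σ' (by simp [hσ']))
      (mono_step dstar hsimple hlen1 (hl σ (by simp)) hmono)

end Fold2


/-! ### Translations by multiples of `2ρ∨` -/

/-- `τ k = t_{-2kρ∨}` -/
noncomputable def tau (k : ℕ) : R.Waf := R.t (-(k • R.tworhov))

lemma t_zero : R.t 0 = 1 := by
  unfold t
  rw [ofAdd_zero, map_one]

lemma tau_zero : R.tau 0 = 1 := by
  unfold tau
  rw [zero_smul, neg_zero, t_zero]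

lemma tau_mul (a b : ℕ) : R.tau a * R.tau b = R.tau (a + b) := by
  unfold tau
  rw [t_mul]
  congr 1
  rw [add_nsmul]
  abel

lemma cf_t {β : R.P} (hβ : β ∈ R.Δpos) (η : R.Qv) : R.cf (R.t η) β = R.pair β η := by
  have h := R.cf_mul_t 1 η β
  rw [one_mul, R.cf_one, if_pos hβ, zero_add] at h
  exact h

lemma pair_neg_nsmul (β : R.P) (k : ℕ) (x : R.Qv) :
    R.pair β (-(k • x)) = -((k:ℤ) * R.pair β x) := by
  rw [map_neg, map_nsmul]
  simp [nsmul_eq_mul]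

lemma cf_tau {β : R.P} (hβ : β ∈ R.Δpos) (k : ℕ) :
    R.cf (R.tau k) β = -((k:ℤ) * R.pair β R.tworhov) := by
  unfold tau
  rw [R.cf_t hβ, R.pair_neg_nsmul]

lemma len_tau (hlen1 : ∀ σ ∈ R.Saf, σ = 1 ∨ R.len σ = 1) (k : ℕ) :
    R.len (R.tau k) = k * ∑ β ∈ R.Δpos, (R.pair β R.tworhov).natAbs := by
  rw [len_eq, Finset.mul_sum]
  refine Finset.sum_congr rfl fun β hβ => ?_
  rw [R.cf_tau hβ, Int.natAbs_neg, Int.natAbs_mul]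
  simp

lemma mono_one_left (z : R.Waf) : R.Mono 1 z := by
  intro a pa hneg
  rw [R.actW_one] at hneg
  exact absurd hneg (fun h => R.not_posA_and_negA pa.2 h)

/-- key lower bound extraction: if `Mono (τ k) x` then `len x ≥ k·L - N₀` -/
lemma lower_bound (hlen1 : ∀ σ ∈ R.Saf, σ = 1 ∨ R.len σ = 1)
    {k : ℕ} (hk : 1 ≤ k) {x : R.Waf} (hmono : R.Mono (R.tau k) x) :
    (k : ℤ) * (∑ β ∈ R.Δpos, (R.pair β R.tworhov).natAbs)
      - R.Δpos.card ≤ (R.len x : ℤ) := by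
  classical
  have key : ∀ β ∈ R.Δpos, (k:ℤ) * R.pair β R.tworhov - 1 ≤ ((R.cf x β).natAbs : ℤ) := by
    intro β hβ
    set h := R.pair β R.tworhov with hh
    have hpos : 1 ≤ h := R.pair_tworhov_pos hlen1 hβ
    set a : R.V := (-β, (k:ℤ) * h) with ha
    have hpa : R.PosPair a := by
      constructor
      · right
        show -(-β) ∈ R.Δpos
        rw [neg_neg]
        exact hβ
      · left
        show 0 < (k:ℤ) * h
        have : (1:ℤ) ≤ (k:ℤ) := by exact_mod_cast hk
        nlinarith
    have hnegτ : R.NegA (R.actW (R.tau k) a) := by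
      unfold actW tau
      rw [negA_iff]
      right
      constructor
      · show (k:ℤ) * h - R.pair (-β) (R.ξpart (R.t (-(k • R.tworhov)))) = 0
        rw [ξpart_t, R.pair_neg_left, R.pair_neg_nsmul, ← hh]
        ring
      · show -(R.σP (R.wpart (R.t (-(k • R.tworhov)))) (-β)) ∈ R.Δpos
        rw [wpart_t, map_one]
        show -((1 : AddAut R.P) (-β)) ∈ R.Δpos
        rw [AddAut.groupCompat_one_apply, neg_neg]
        exact hβ
    have hnegx := hmono a hpa hnegτ
    rw [negA_iff] at hnegx
    have hsnd : (R.actW x a).2 = (k:ℤ) * h - R.pair (-β) (R.ξpart x) := rfl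
    have hfst : (R.actW x a).1 = R.σP (R.wpart x) (-β) := rfl
    rw [R.pair_neg_left] at hsnd
    -- cf x β = pair β ξ + χ
    have hcf : R.cf x β = R.pair β (R.ξpart x)
        + (if R.σP (R.wpart x) β ∈ R.Δpos then 0 else 1) := rfl
    rcases hnegx with hlt | ⟨heq, hmem⟩
    · rw [hsnd] at hlt
      have : R.cf x β ≤ -((k:ℤ) * h) + 1 := by
        rw [hcf]
        split <;> omega
      omega
    · rw [hsnd] at heq
      have hmem' : R.σP (R.wpart x) β ∈ R.Δpos := by
        rw [hfst, map_neg, neg_neg] at hmem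
        exact hmem
      have : R.cf x β = -((k:ℤ) * h) := by
        rw [hcf, if_pos hmem']
        omega
      omega
  have hsum : ∑ β ∈ R.Δpos, ((k:ℤ) * R.pair β R.tworhov - 1)
      ≤ ∑ β ∈ R.Δpos, ((R.cf x β).natAbs : ℤ) :=
    Finset.sum_le_sum key
  have h1 : ∑ β ∈ R.Δpos, ((k:ℤ) * R.pair β R.tworhov - 1)
      = (k:ℤ) * ∑ β ∈ R.Δpos, R.pair β R.tworhov - R.Δpos.card := by
    rw [Finset.sum_sub_distrib, Finset.mul_sum]
    simp
  have h2 : ((∑ β ∈ R.Δpos, (R.pair β R.tworhov).natAbs : ℕ) : ℤ)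
      = ∑ β ∈ R.Δpos, R.pair β R.tworhov := by
    rw [Nat.cast_sum]
    refine Finset.sum_congr rfl fun β hβ => ?_
    have := R.pair_tworhov_pos hlen1 hβ
    exact Int.natAbs_of_nonneg (by omega)
  have h3 : (R.len x : ℤ) = ∑ β ∈ R.Δpos, ((R.cf x β).natAbs : ℤ) := by
    rw [len_eq]
    push_cast
    rfl
  rw [h3, h2]
  omega


/-- an antitone sequence of naturals is eventually constant -/
lemma nat_stab (f : ℕ → ℕ) (hf : ∀ k, f (k+1) ≤ f k) :
    ∃ m, ∀ k, m ≤ k → f k = f m := by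
  classical
  have hchain : ∀ m k, m ≤ k → f k ≤ f m := by
    intro m k hmk
    induction hmk with
    | refl => exact le_refl _
    | step h ih => exact le_trans (hf _) (by omega)
  have hex : ∃ v, ∃ k, f k = v := ⟨f 0, 0, rfl⟩
  obtain ⟨m, hm⟩ := Nat.find_spec hex
  refine ⟨m, fun k hk => ?_⟩
  have h1 : f k ≤ f m := hchain m k hk
  have h2 : Nat.find hex ≤ f k := Nat.find_min' hex ⟨k, rfl⟩
  omega

end AffineRootSetup



/-- let `(y_k)` be a sequence in `W_af` with `y_{k+1} = y_k ∗ t_{−2ρ∨}`,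
where `∗` is the Demazure product computed along a fixed reduced word for `t_{−2ρ∨}` in the
affine simple reflections. Then there is `m₁ ≥ 0` such that for all `k ≥ m₁` one has
`y_{k+1} = y_k · t_{−2ρ∨}` (ordinary product) and
`ℓ(y_k t_{−2nρ∨}) = ℓ(y_k) + ℓ(t_{−2nρ∨})` for all `n > 0`. -/
theorem statement8 (R : AffineRootSetup)
    (dstar : R.Waf → R.Waf → R.Waf)
    (hassoc : ∀ a b c : R.Waf, dstar (dstar a b) c = dstar a (dstar b c))
    (hone : ∀ a : R.Waf, dstar a 1 = a ∧ dstar 1 a = a)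
    (hsimple : ∀ (y : R.Waf), ∀ σ ∈ R.Saf,
      dstar y σ = if R.len (y * σ) = R.len y + 1 then y * σ else y)
    (hgen : Subgroup.closure R.Saf = ⊤)
    (word : List R.Waf)
    (hword : ∀ σ ∈ word, σ ∈ R.Saf)
    (hprod : word.prod = R.t (-R.tworhov))
    (hreduced : word.length = R.len (R.t (-R.tworhov)))
    (y : ℕ → R.Waf)
    (hy : ∀ k : ℕ, y (k + 1) = word.foldl dstar (y k)) :
    ∃ m₁ : ℕ, ∀ k : ℕ, m₁ ≤ k →
      y (k + 1) = y k * R.t (-R.tworhov) ∧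
      ∀ n : ℕ, 0 < n →
        R.len (y k * R.t (-((n : ℤ) • R.tworhov)))
          = R.len (y k) + R.len (R.t (-((n : ℤ) • R.tworhov))) := by
  classical
  -- every affine simple reflection is trivial or has length one
  have hlen1 : ∀ σ ∈ R.Saf, σ = 1 ∨ R.len σ = 1 := by
    intro σ hσ
    have h1 := hsimple 1 σ hσ
    rw [one_mul, R.len_one, (hone σ).2] at h1
    by_cases h : R.len σ = 0 + 1
    · right; omega
    · left
      rw [if_neg h] at h1
      exact h1
  set L := word.length with hL
  have hτ1 : R.t (-R.tworhov) = R.tau 1 := by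
    unfold AffineRootSetup.tau
    rw [one_nsmul]
  have hLH : L = ∑ β ∈ R.Δpos, (R.pair β R.tworhov).natAbs := by
    rw [hreduced, hτ1, R.len_tau hlen1, one_mul]
  have hlentau : ∀ n : ℕ, R.len (R.tau n) = n * L := by
    intro n
    rw [R.len_tau hlen1, hLH]
  have hprod1 : word.prod = R.tau 1 := by rw [hprod, hτ1]
  -- folding from a pure translation
  have hfoldτ : ∀ k : ℕ, List.foldl dstar (R.tau k) word = R.tau (k+1) := by
    intro k
    have hlen : R.len (R.tau k * word.prod) = R.len (R.tau k) + word.length := by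
      rw [hprod1, R.tau_mul, hlentau, hlentau]
      rw [← hL]
      ring
    have h := AffineRootSetup.fold_eq_prod_of_len dstar hsimple hlen1 word hword (R.tau k) hlen
    rw [h, hprod1, R.tau_mul]
  -- domination of the pure-translation orbit
  have hMono : ∀ k : ℕ, R.Mono (R.tau k) (y k) := by
    intro k
    induction k with
    | zero =>
      rw [R.tau_zero]
      exact R.mono_one_left (y 0)
    | succ k ih =>
      have h := AffineRootSetup.mono_fold dstar hsimple hlen1 word hword ih
      rw [hfoldτ k] at h
      rw [hy k]
      exact h
  -- the deficiency sequence
  set A : ℕ → ℤ := fun k => (R.len (y k) : ℤ) - k * L with hA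
  have hAanti : ∀ k, A (k+1) ≤ A k := by
    intro k
    have h1 : R.len (y (k+1)) ≤ R.len (y k) + L := by
      rw [hy k]
      exact AffineRootSetup.len_fold_le dstar hsimple word hword (y k)
    show (R.len (y (k+1)) : ℤ) - (↑(k+1)) * L ≤ (R.len (y k):ℤ) - k * L
    have h2 : ((k:ℤ)+1) * L = (k:ℤ) * L + L := by ring
    push_cast
    rw [h2]
    have h1' : (R.len (y (k+1)) : ℤ) ≤ (R.len (y k) : ℤ) + L := by exact_mod_cast h1
    omega
  have hAlow : ∀ k, -(R.Δpos.card : ℤ) ≤ A k := by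
    intro k
    rcases Nat.eq_zero_or_pos k with rfl | hk
    · have h0 : A 0 = (R.len (y 0) : ℤ) := by rw [hA]; push_cast; ring
      rw [h0]
      omega
    · have h := R.lower_bound hlen1 hk (hMono k)
      rw [← hLH] at h
      show -(R.Δpos.card : ℤ) ≤ (R.len (y k) : ℤ) - (k : ℤ) * (L : ℤ)
      omega
  -- stabilization
  obtain ⟨m₁, hm₁⟩ := AffineRootSetup.nat_stab (fun k => (A k + R.Δpos.card).toNat)
    (fun k => by
      have h1 := hAanti k
      have h2 := hAlow k
      have h3 := hAlow (k+1)
      show (A (k+1) + (R.Δpos.card:ℤ)).toNat ≤ (A k + (R.Δpos.card:ℤ)).toNat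
      omega)
  have hAconst : ∀ k, m₁ ≤ k → A k = A m₁ := by
    intro k hk
    have h := hm₁ k hk
    have h1 := hAlow k
    have h2 := hAlow m₁
    omega
  -- for k ≥ m₁ every pass is an honest product
  have hstep : ∀ k, m₁ ≤ k →
      R.len (y (k+1)) = R.len (y k) + L ∧ y (k + 1) = y k * R.t (-R.tworhov) := by
    intro k hk
    have hA1 : A (k+1) = A k := by
      rw [hAconst (k+1) (by omega), hAconst k hk]
    have hlen : R.len (y (k+1)) = R.len (y k) + L := by
      rw [hA] at hA1
      simp only at hA1
      have h2 : (((k:ℤ))+1) * L = (k:ℤ) * L + L := by ring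
      push_cast at hA1
      rw [h2] at hA1
      omega
    have hfold : List.foldl dstar (y k) word = y k * word.prod := by
      refine AffineRootSetup.fold_eq_prod_of_fold_len dstar hsimple hlen1 word hword (y k) ?_
      rw [← hy k]
      exact hlen
    exact ⟨hlen, by rw [hy k, hfold, hprod]⟩
  refine ⟨m₁, fun k hk => ⟨(hstep k hk).2, ?_⟩⟩
  intro n hn
  have hyn : ∀ n : ℕ, y (k+n) = y k * R.tau n ∧ R.len (y (k+n)) = R.len (y k) + n * L := by
    intro n
    induction n with
    | zero =>
      constructor
      · rw [Nat.add_zero, R.tau_zero, mul_one]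
      · rw [Nat.add_zero]
        ring
    | succ n ih =>
      have hk' : m₁ ≤ k + n := by omega
      have hs := hstep (k+n) hk'
      have hkn : k + (n+1) = (k+n) + 1 := by omega
      constructor
      · rw [hkn, hs.2, ih.1, hτ1, mul_assoc, R.tau_mul]
      · rw [hkn, hs.1, ih.2]
        ring
  have hcast : R.t (-((n : ℤ) • R.tworhov)) = R.tau n := by
    unfold AffineRootSetup.tau
    congr 2
    exact natCast_zsmul R.tworhov n
  rw [hcast, ← (hyn n).1, (hyn n).2, hlentau]
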